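/- Let A be a (2n+1)×(2n+1) DASASM, and let N(A) be the number of zeros among the first n entries A_{1,n+1}, …, A_{n,n+1} of the central column of A. Then the central entry satisfies A_{n+1,n+1} = (−1)^{n+N(A)}; in particular A_{n+1,n+1} ∈ {1, −1}. -/

import Mathlib

/-- `A` is an alternating sign matrix: in every row and every column the entries lie in
`{-1,0,1}`, the partial sums (from one end) are all `0` or `1`, and the full sums are `1`
(equivalently, the nonzero entries of every row and column alternate in sign and sum to `1`). -/
def IsAsm {n : ℕ} (A : Matrix (Fin n) (Fin n) ℤ) : Prop :=
  (∀ i j, A i j = -1 ∨ A i j = 0 ∨ A i j = 1) ∧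
  (∀ i k : Fin n, (∑ j ∈ Finset.Iic k, A i j) = 0 ∨ (∑ j ∈ Finset.Iic k, A i j) = 1) ∧
  (∀ i : Fin n, (∑ j, A i j) = 1) ∧
  (∀ j k : Fin n, (∑ i ∈ Finset.Iic k, A i j) = 0 ∨ (∑ i ∈ Finset.Iic k, A i j) = 1) ∧
  (∀ j : Fin n, (∑ i, A i j) = 1)
/-- `A` is a diagonally and antidiagonally symmetric alternating sign matrix:
`A i j = A j i` and `A i j = A (n+1-j) (n+1-i)` (in 1-based indexing). -/
def IsDasasm {n : ℕ} (A : Matrix (Fin n) (Fin n) ℤ) : Prop :=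
  IsAsm A ∧ ∀ i j, A i j = A j i ∧ A i j = A j.rev i.rev

/-- The set of `(2n+1) × (2n+1)` DASASMs. -/
def dasasmSet (n : ℕ) : Set (Matrix (Fin (2*n+1)) (Fin (2*n+1)) ℤ) := {A | IsDasasm A}

/-- For a `(2n+1) × (2n+1)` DASASM `A`, the central entry equals `(-1)^(n + N(A))`,
where `N(A)` is the number of `0`s among the first `n` entries of the central column;
in particular the central entry is `1` or `-1`. -/
theorem dasasm_central_entry (n : ℕ) (A : Matrix (Fin (2*n+1)) (Fin (2*n+1)) ℤ)
    (hA : IsDasasm A) :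
    A ⟨n, by omega⟩ ⟨n, by omega⟩ =
      (-1 : ℤ) ^ (n + (Finset.univ.filter
        (fun i : Fin (2*n+1) => (i : ℕ) < n ∧ A i ⟨n, by omega⟩ = 0)).card) ∧
    (A ⟨n, by omega⟩ ⟨n, by omega⟩ = 1 ∨ A ⟨n, by omega⟩ ⟨n, by omega⟩ = -1) := by
  set c : Fin (2*n+1) := ⟨n, by omega⟩ with hc
  have hcrev : c.rev = c := by
    ext; simp [Fin.rev, hc]; omega
  have hsym : ∀ i, A i c = A i.rev c := by
    intro i
    have h1 := (hA.2 i c).2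
    rw [hcrev] at h1
    rw [h1, (hA.2 c i.rev).1]
  set P := Finset.univ.filter (fun i : Fin (2*n+1) => (i : ℕ) < n) with hP
  set Q := Finset.univ.filter (fun i : Fin (2*n+1) => n < (i : ℕ)) with hQ
  set S := ∑ i ∈ P, A i c with hS
  -- column sum splits
  have hsum : ∑ i, A i c = 1 := hA.1.2.2.2.2 c
  have hcompl : Finset.univ.filter (fun i : Fin (2*n+1) => ¬ (i : ℕ) < n) = insert c Q := by
    ext i
    simp only [Finset.mem_filter, Finset.mem_univ, true_and, Finset.mem_insert, hQ,
      Fin.ext_iff, hc]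
    omega
  have hcQ : c ∉ Q := by simp [hQ, hc]
  have hTS : ∑ i ∈ Q, A i c = S := by
    rw [hS]
    refine Finset.sum_nbij' (fun a => Fin.rev a) (fun a => Fin.rev a) ?_ ?_ ?_ ?_ ?_
    · intro a ha
      simp only [hP, hQ, Finset.mem_filter, Finset.mem_univ, true_and, Fin.val_rev] at *
      omega
    · intro a ha
      simp only [hP, hQ, Finset.mem_filter, Finset.mem_univ, true_and, Fin.val_rev] at *
      omega
    · intro a _; exact Fin.rev_rev a
    · intro a _; exact Fin.rev_rev a
    · intro a _; exact hsym a
  have hkey : S + A c c + S = 1 := by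
    rw [← hsum, ← Finset.sum_filter_add_sum_filter_not Finset.univ
      (fun i : Fin (2*n+1) => (i : ℕ) < n) (fun i => A i c), hcompl,
      Finset.sum_insert hcQ, hTS]
    ring
  -- S is 0 or 1
  have hS01 : S = 0 ∨ S = 1 := by
    rcases Nat.eq_zero_or_pos n with h0 | hpos
    · left
      have : P = ∅ := by
        ext i; simp [hP]; omega
      simp [hS, this]
    · have hPIic : P = Finset.Iic (⟨n-1, by omega⟩ : Fin (2*n+1)) := by
        ext i
        simp [hP, Fin.le_def]
        omega
      rw [hS, hPIic]
      exact hA.1.2.2.2.1 c ⟨n-1, by omega⟩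
  -- parity
  set N := (Finset.univ.filter
        (fun i : Fin (2*n+1) => (i : ℕ) < n ∧ A i c = 0)).card with hN
  have hZP : Finset.univ.filter (fun i : Fin (2*n+1) => (i : ℕ) < n ∧ A i c = 0)
      = P.filter (fun i => A i c = 0) := by
    ext i; simp [hP, and_assoc]
  have hcardP : P.card = n := by
    have : P = Finset.Iio c := by
      ext i; simp [hP, Fin.lt_def, hc]
    rw [this]
    simp [hc]
  rw [hZP] at hN
  have hNle : N ≤ n := by
    have := Finset.card_filter_le P (fun i => A i c = 0)
    omega
  have hparity : (2 : ℤ) ∣ S - ((n : ℤ) - N) := by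
    have hsplit : S = ∑ i ∈ P.filter (fun i => ¬ A i c = 0), A i c := by
      rw [hS, ← Finset.sum_filter_add_sum_filter_not P (fun i => A i c = 0) (fun i => A i c)]
      rw [Finset.sum_congr rfl (fun i hi => (Finset.mem_filter.mp hi).2)]
      simp
    have hcardNZ : (P.filter (fun i => ¬ A i c = 0)).card = n - N := by
      have := Finset.card_filter_add_card_filter_not (s := P)
        (p := fun i => A i c = 0)
      omega
    have : (2 : ℤ) ∣ ∑ i ∈ P.filter (fun i => ¬ A i c = 0), (A i c - 1) := by
      refine Finset.dvd_sum ?_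
      intro i hi
      rcases hA.1.1 i c with h | h | h
      · rw [h]; norm_num
      · exact absurd h (Finset.mem_filter.mp hi).2
      · rw [h]; norm_num
    rw [Finset.sum_sub_distrib, Finset.sum_const, hcardNZ, nsmul_eq_mul, mul_one] at this
    have hN' : ((n - N : ℕ) : ℤ) = (n : ℤ) - N := by
      rw [Nat.cast_sub hNle]
    rw [hsplit]
    omega
  rcases hS01 with h | h
  · have hAcc : A c c = 1 := by omega
    have h2 : (2 : ℤ) ∣ ((n + N : ℕ) : ℤ) := by push_cast; omega
    have h3 : 2 ∣ n + N := by exact_mod_cast h2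
    have heven : Even (n + N) := even_iff_two_dvd.mpr h3
    exact ⟨by rw [hAcc, heven.neg_one_pow], Or.inl hAcc⟩
  · have hAcc : A c c = -1 := by omega
    have h2 : ¬ (2 : ℤ) ∣ ((n + N : ℕ) : ℤ) := by push_cast; omega
    have h3 : ¬ 2 ∣ n + N := by exact_mod_cast h2
    have hodd : Odd (n + N) := Nat.odd_iff.mpr (by omega)
    exact ⟨by rw [hAcc, hodd.neg_one_pow], Or.inr hAcc⟩
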